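/- Let d(t), e(t), p(t), q(t) be the polynomials determined by (1 − t²)·d(t) = (1 + t^{15})(1 − t^{17}), (1 − t²)·e(t) = (1 + t^{13})(1 − t^{17}), (1 − t²)·p(t) = (1 + t³)(1 − t⁷), and (1 − t²)·q(t) = (1 + t³)(1 + t)(1 − t⁴). Then the polynomial F(t) = e(t)·p(t) + d(t)·q(t) is not unimodular: F has a complex root t₀ with |t₀| ≠ 1 (in fact exactly four roots, counted with multiplicity, not lying on the unit circle). -/

import Mathlib

open Polynomial
open scoped Classical

noncomputable def EKHc : Polynomial ℂ :=
  C 2 * X ^ 9 + C 1 * X ^ 8 - C 16 * X ^ 7 - C 7 * X ^ 6 + C 41 * X ^ 5 + C 14 * X ^ 4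
    - C 36 * X ^ 3 - C 8 * X ^ 2 + C 7 * X + C 1

noncomputable def EKHr : Polynomial ℝ :=
  C 2 * X ^ 9 + C 1 * X ^ 8 - C 16 * X ^ 7 - C 7 * X ^ 6 + C 41 * X ^ 5 + C 14 * X ^ 4
    - C 36 * X ^ 3 - C 8 * X ^ 2 + C 7 * X + C 1

noncomputable def EKGc : Polynomial ℂ :=
  C 2 * X ^ 18 + C 1 * X ^ 17 + C 2 * X ^ 16 + C 1 * X ^ 15 + C 1 * X ^ 14 + C 1 * X ^ 12
    - C 1 * X ^ 11 + C 1 * X ^ 10 - C 1 * X ^ 9 + C 1 * X ^ 8 - C 1 * X ^ 7 + C 1 * X ^ 6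
    + C 1 * X ^ 4 + C 1 * X ^ 3 + C 2 * X ^ 2 + C 1 * X + C 2

noncomputable def EKA : Polynomial ℂ :=
  (X ^ 2 - X + 1) *
  (X ^ 16 + X ^ 15 + X ^ 14 + X ^ 13 + X ^ 12 + X ^ 11 + X ^ 10 + X ^ 9 + X ^ 8 + X ^ 7 +
    X ^ 6 + X ^ 5 + X ^ 4 + X ^ 3 + X ^ 2 + X + 1)

def EKS : ℂ → Prop := fun β => β.im = 0 ∧ |β.re| ≤ 2

lemma EKHc_natDegree : EKHc.natDegree = 9 := by
  unfold EKHc; compute_degree!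

lemma EKHc_ne : EKHc ≠ 0 := by
  intro h
  have := congrArg (eval 0) h
  simp [EKHc] at this

lemma EKHc_leadingCoeff : EKHc.leadingCoeff = 2 := by
  rw [Polynomial.leadingCoeff, EKHc_natDegree]
  unfold EKHc
  simp [coeff_X_pow, Polynomial.coeff_C, Polynomial.coeff_one]

lemma EKHc_card_roots : Multiset.card EKHc.roots = 9 := by
  rw [Polynomial.splits_iff_card_roots.mp (IsAlgClosed.splits EKHc), EKHc_natDegree]

lemma EKHc_fac : EKHc = C 2 * (EKHc.roots.map fun a => X - C a).prod := by
  conv_lhs => rw [Splits.eq_prod_roots (IsAlgClosed.splits EKHc)]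
  rw [EKHc_leadingCoeff]

lemma EK_abs_one_of_sq {a : ℝ} (h0 : 0 ≤ a) (h : a ^ 2 = 1) : a = 1 := by
  have h1 : (a - 1) * (a + 1) = 0 := by linear_combination h
  rcases mul_eq_zero.mp h1 with h2 | h2
  · linarith
  · linarith

lemma EK_quad_root_abs_one {r : ℝ} (hr : |r| ≤ 2) {z : ℂ}
    (h : z ^ 2 - (r : ℂ) * z + 1 = 0) : ‖z‖ = 1 := by
  have hre := congrArg Complex.re h
  have him := congrArg Complex.im h
  simp only [Complex.add_re, Complex.sub_re, Complex.mul_re, Complex.mul_im, Complex.add_im,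
    Complex.sub_im, Complex.one_re, Complex.one_im, Complex.zero_re, Complex.zero_im,
    Complex.ofReal_re, Complex.ofReal_im, pow_two] at hre him
  have hr2 : r ^ 2 ≤ 4 := by
    have := abs_le.mp hr
    nlinarith [this.1, this.2]
  have habs : ‖z‖ ^ 2 = z.re ^ 2 + z.im ^ 2 := by
    rw [Complex.sq_norm, Complex.normSq_apply]; ring
  have hcase : z.im * (2 * z.re - r) = 0 := by nlinarith [him]
  rcases mul_eq_zero.mp hcase with h1 | h1
  · -- z real
    have hx : z.re * z.re - r * z.re + 1 = 0 := by nlinarith [hre]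
    have hsq : (z.re ^ 2 - 1) ^ 2 = (r ^ 2 - 4) * z.re ^ 2 := by nlinarith [hx]
    have : z.re ^ 2 = 1 := by nlinarith [sq_nonneg (z.re ^ 2 - 1), sq_nonneg z.re]
    apply EK_abs_one_of_sq (norm_nonneg z)
    rw [habs, this, h1]; ring
  · -- 2 z.re = r
    have : z.re ^ 2 + z.im ^ 2 = 1 := by linear_combination -hre + z.re * h1
    apply EK_abs_one_of_sq (norm_nonneg z)
    rw [habs, this]

lemma EK_quad_root_abs_ne_one {β z : ℂ} (h : z ^ 2 - β * z + 1 = 0)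
    (hz : ‖z‖ = 1) : β.im = 0 ∧ |β.re| ≤ 2 := by
  have hz0 : z ≠ 0 := by
    intro h0; rw [h0] at h; simp at h
  have hconj : z * (starRingEnd ℂ) z = 1 := by
    rw [Complex.mul_conj]
    norm_cast
    rw [Complex.normSq_eq_norm_sq, hz]; norm_num
  have hβ : β = z + (starRingEnd ℂ) z := by
    have : (z + (starRingEnd ℂ) z) * z = z ^ 2 + 1 := by
      rw [add_mul]
      rw [mul_comm ((starRingEnd ℂ) z) z, hconj]
      ring
    have hb : β * z = z ^ 2 + 1 := by linear_combination -h
    have := mul_right_cancel₀ hz0 (hb.trans this.symm)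
    exact this
  rw [hβ, Complex.add_conj]
  constructor
  · simp
  · simp only [Complex.ofReal_re]
    have := Complex.abs_re_le_norm z
    rw [hz] at this
    rw [abs_mul]
    norm_num
    linarith [this]

lemma EK_quad_natDegree (β : ℂ) : (X ^ 2 - C β * X + 1 : Polynomial ℂ).natDegree = 2 := by
  compute_degree!

lemma EK_quad_ne (β : ℂ) : (X ^ 2 - C β * X + 1 : Polynomial ℂ) ≠ 0 := by
  intro h
  have := congrArg natDegree h
  rw [EK_quad_natDegree] at this
  simp at this

lemma EK_quad_card_roots (β : ℂ) :
    Multiset.card (X ^ 2 - C β * X + 1 : Polynomial ℂ).roots = 2 := by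
  rw [Polynomial.splits_iff_card_roots.mp (IsAlgClosed.splits _), EK_quad_natDegree]

lemma EK_mem_quad_roots {β z : ℂ} :
    z ∈ (X ^ 2 - C β * X + 1 : Polynomial ℂ).roots ↔ z ^ 2 - β * z + 1 = 0 := by
  rw [Polynomial.mem_roots (EK_quad_ne β)]
  constructor
  · intro h
    simpa [Polynomial.IsRoot, eval_add, eval_sub, eval_mul, eval_pow] using h
  · intro h
    simpa [Polynomial.IsRoot, eval_add, eval_sub, eval_mul, eval_pow] using h

lemma EK_eval_GH {z : ℂ} (hz : z ≠ 0) :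
    eval z EKGc = z ^ 9 * eval (z + z⁻¹) EKHc := by
  obtain ⟨y, hy⟩ : ∃ y, y = z + z⁻¹ := ⟨_, rfl⟩
  rw [← hy]
  have hzy : z * y = z ^ 2 + 1 := by
    rw [hy]; field_simp
  have e1 : z ^ 9 * y ^ 1 = z ^ 8 * (z ^ 2 + 1) ^ 1 := by rw [← hzy]; ring
  have e2 : z ^ 9 * y ^ 2 = z ^ 7 * (z ^ 2 + 1) ^ 2 := by rw [← hzy]; ring
  have e3 : z ^ 9 * y ^ 3 = z ^ 6 * (z ^ 2 + 1) ^ 3 := by rw [← hzy]; ring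
  have e4 : z ^ 9 * y ^ 4 = z ^ 5 * (z ^ 2 + 1) ^ 4 := by rw [← hzy]; ring
  have e5 : z ^ 9 * y ^ 5 = z ^ 4 * (z ^ 2 + 1) ^ 5 := by rw [← hzy]; ring
  have e6 : z ^ 9 * y ^ 6 = z ^ 3 * (z ^ 2 + 1) ^ 6 := by rw [← hzy]; ring
  have e7 : z ^ 9 * y ^ 7 = z ^ 2 * (z ^ 2 + 1) ^ 7 := by rw [← hzy]; ring
  have e8 : z ^ 9 * y ^ 8 = z ^ 1 * (z ^ 2 + 1) ^ 8 := by rw [← hzy]; ring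
  have e9 : z ^ 9 * y ^ 9 = (z ^ 2 + 1) ^ 9 := by rw [← hzy]; ring
  unfold EKGc EKHc
  simp only [eval_add, eval_sub, eval_mul, eval_pow, eval_C, eval_X]
  linear_combination (-2:ℂ) * e9 - e8 + 16 * e7 + 7 * e6 - 41 * e5 - 14 * e4 + 36 * e3
    + 8 * e2 - 7 * e1

lemma EKGc_fac :
    EKGc = C 2 * (EKHc.roots.map fun β => X ^ 2 - C β * X + 1).prod := by
  apply Polynomial.eq_of_infinite_eval_eq
  have hinf : ({(0 : ℂ)}ᶜ : Set ℂ).Infinite :=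
    Set.Finite.infinite_compl (Set.finite_singleton 0)
  refine hinf.mono fun z hz => ?_
  have hz0 : z ≠ 0 := hz
  show eval z EKGc = eval z _
  rw [EK_eval_GH hz0]
  conv_lhs => rw [EKHc_fac]
  rw [eval_mul, eval_C, eval_multiset_prod, eval_mul, eval_C, eval_multiset_prod]
  simp only [Multiset.map_map, Function.comp_apply, eval_sub, eval_add, eval_mul, eval_pow,
    eval_C, eval_X, eval_one]
  have h1 : (EKHc.roots.map fun β => z ^ 2 - β * z + 1).prod
      = (EKHc.roots.map fun β => z * ((z + z⁻¹) - β)).prod := by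
    refine congrArg Multiset.prod (Multiset.map_congr rfl fun β _ => ?_)
    field_simp
    ring
  rw [h1]
  have h2 : (EKHc.roots.map fun β => z * ((z + z⁻¹) - β)).prod
      = (EKHc.roots.map fun _ => z).prod * (EKHc.roots.map fun β => (z + z⁻¹) - β).prod :=
    Multiset.prod_map_mul
  rw [h2, Multiset.map_const', Multiset.prod_replicate, EKHc_card_roots]
  ring

lemma EK_bridge (r : ℝ) (h : eval r EKHr = 0) : (↑r : ℂ) ∈ EKHc.roots := by
  rw [Polynomial.mem_roots EKHc_ne]
  have hev : eval (↑r : ℂ) EKHc = ((eval r EKHr : ℝ) : ℂ) := by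
    simp [EKHc, EKHr]
  show eval _ EKHc = 0
  rw [hev, h]
  norm_num

lemma EK_ivt_inc {a b : ℝ} (hab : a ≤ b) (ha : eval a EKHr < 0) (hb : 0 < eval b EKHr) :
    ∃ r, a < r ∧ r < b ∧ eval r EKHr = 0 := by
  have := intermediate_value_Ioo hab (EKHr.continuous.continuousOn)
  have h0 : (0 : ℝ) ∈ Set.Ioo (eval a EKHr) (eval b EKHr) := ⟨ha, hb⟩
  obtain ⟨r, hr, hr0⟩ := this h0
  exact ⟨r, hr.1, hr.2, hr0⟩

lemma EK_ivt_dec {a b : ℝ} (hab : a ≤ b) (ha : 0 < eval a EKHr) (hb : eval b EKHr < 0) :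
    ∃ r, a < r ∧ r < b ∧ eval r EKHr = 0 := by
  have := intermediate_value_Ioo' hab (EKHr.continuous.continuousOn)
  have h0 : (0 : ℝ) ∈ Set.Ioo (eval b EKHr) (eval a EKHr) := ⟨hb, ha⟩
  obtain ⟨r, hr, hr0⟩ := this h0
  exact ⟨r, hr.1, hr.2, hr0⟩

lemma EK_seven : 7 ≤ Multiset.card (EKHc.roots.filter EKS) := by
  have ev1 : eval (-2 : ℝ) EKHr < 0 := by norm_num [EKHr]
  have ev2 : (0:ℝ) < eval (-1 : ℝ) EKHr := by norm_num [EKHr]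
  have ev3 : eval (-1/2 : ℝ) EKHr < 0 := by norm_num [EKHr]
  have ev4 : (0:ℝ) < eval (0 : ℝ) EKHr := by norm_num [EKHr]
  have ev5 : eval (1/2 : ℝ) EKHr < 0 := by norm_num [EKHr]
  have ev6 : (0:ℝ) < eval (3/2 : ℝ) EKHr := by norm_num [EKHr]
  have ev7 : eval (17/10 : ℝ) EKHr < 0 := by norm_num [EKHr]
  have ev8 : (0:ℝ) < eval (49/25 : ℝ) EKHr := by norm_num [EKHr]
  obtain ⟨r1, h1a, h1b, h1⟩ := EK_ivt_inc (by norm_num : (-2:ℝ) ≤ -1) ev1 ev2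
  obtain ⟨r2, h2a, h2b, h2⟩ := EK_ivt_dec (by norm_num : (-1:ℝ) ≤ -1/2) ev2 ev3
  obtain ⟨r3, h3a, h3b, h3⟩ := EK_ivt_inc (by norm_num : (-1/2:ℝ) ≤ 0) ev3 ev4
  obtain ⟨r4, h4a, h4b, h4⟩ := EK_ivt_dec (by norm_num : (0:ℝ) ≤ 1/2) ev4 ev5
  obtain ⟨r5, h5a, h5b, h5⟩ := EK_ivt_inc (by norm_num : (1/2:ℝ) ≤ 3/2) ev5 ev6
  obtain ⟨r6, h6a, h6b, h6⟩ := EK_ivt_dec (by norm_num : (3/2:ℝ) ≤ 17/10) ev6 ev7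
  obtain ⟨r7, h7a, h7b, h7⟩ := EK_ivt_inc (by norm_num : (17/10:ℝ) ≤ 49/25) ev7 ev8
  set lR : List ℝ := [r1, r2, r3, r4, r5, r6, r7] with hlR
  have hchain : List.Chain' (· < ·) lR := by
    rw [hlR]
    refine List.IsChain.cons_cons ?_ (List.IsChain.cons_cons ?_ (List.IsChain.cons_cons ?_ (List.IsChain.cons_cons ?_
      (List.IsChain.cons_cons ?_ (List.IsChain.cons_cons ?_ (List.isChain_singleton _)))))) <;> linarith
  have hpw : List.Pairwise (· < ·) lR := List.isChain_iff_pairwise.mp hchain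
  have hnodupR : lR.Nodup := hpw.imp ne_of_lt
  set lC : List ℂ := lR.map (fun r : ℝ => (r : ℂ)) with hlC
  have hnodup : lC.Nodup := hnodupR.map Complex.ofReal_injective
  have hsub : ∀ z ∈ (lC : Multiset ℂ), z ∈ EKHc.roots.filter EKS := by
    intro z hz
    rw [hlC] at hz
    simp only [Multiset.mem_coe, List.mem_map, hlR] at hz
    obtain ⟨r, hrmem, rfl⟩ := hz
    have hr0 : eval r EKHr = 0 ∧ -2 < r ∧ r < 2 := by
      simp only [List.mem_cons, List.not_mem_nil, or_false, List.mem_singleton] at hrmem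
      rcases hrmem with rfl | rfl | rfl | rfl | rfl | rfl | rfl <;>
        exact ⟨by assumption, by linarith, by linarith⟩
    rw [Multiset.mem_filter]
    refine ⟨EK_bridge r hr0.1, ?_, ?_⟩
    · simp
    · simp only [Complex.ofReal_re]
      rw [abs_le]
      constructor <;> linarith [hr0.2.1, hr0.2.2]
  have hle : (lC : Multiset ℂ) ≤ EKHc.roots.filter EKS :=
    (Multiset.le_iff_subset (Multiset.coe_nodup.mpr hnodup)).mpr hsub
  have := Multiset.card_le_card hle
  simpa [hlC, hlR] using this

lemma EK_prod_abs_lower (c : ℝ) (hc : 0 ≤ c) (m : Multiset ℂ)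
    (h : ∀ z ∈ m, c ≤ ‖z‖) : c ^ Multiset.card m ≤ ‖m.prod‖ := by
  induction m using Multiset.induction_on with
  | empty => simp
  | cons a s ih =>
    rw [Multiset.card_cons, Multiset.prod_cons, pow_succ, norm_mul]
    have h1 : c ≤ ‖a‖ := h a (Multiset.mem_cons_self a s)
    have h2 : c ^ Multiset.card s ≤ ‖s.prod‖ :=
      ih fun z hz => h z (Multiset.mem_cons_of_mem hz)
    calc c ^ Multiset.card s * c ≤ ‖s.prod‖ * ‖a‖ :=
          mul_le_mul h2 h1 hc (norm_nonneg _)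
      _ = ‖a‖ * ‖s.prod‖ := by ring

lemma EK_nonreal : ∃ β ∈ EKHc.roots, β.im ≠ 0 := by
  by_contra hcon
  push_neg at hcon

  have hy1 : ∃ y₀ : ℂ, y₀ = ((-(18317478032643803 : ℝ) / 10000000000000000) : ℂ) + ((-(61024364915011 : ℝ) / 2000000000000000) : ℂ) * Complex.I := ⟨_, rfl⟩
  obtain ⟨y₀, hy₀⟩ := hy1
  have hy2 : y₀ ^ 2 = (((41929612768569534625744318256223 : ℝ) / 12500000000000000000000000000000) : ℂ) + (((1117812463786753208743730826833 : ℝ) / 10000000000000000000000000000000) : ℂ) * Complex.I := by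
    rw [pow_two, hy₀]
    rw [Complex.ext_iff]
    constructor <;>
      simp only [Complex.add_re, Complex.add_im, Complex.mul_re, Complex.mul_im,
        Complex.ofReal_re, Complex.ofReal_im, Complex.I_re, Complex.I_im] <;>
      norm_num
  have hy3 : y₀ ^ 3 = ((-(3070473698329717485580849897306845480307706290201 : ℝ) / 500000000000000000000000000000000000000000000000) : ℂ) + ((-(30710417211366466248566516796829641806631019711 : ℝ) / 100000000000000000000000000000000000000000000000) : ℂ) * Complex.I := by
    rw [pow_succ, hy2, hy₀]
    rw [Complex.ext_iff]
    constructor <;>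
      simp only [Complex.add_re, Complex.add_im, Complex.mul_re, Complex.mul_im,
        Complex.ofReal_re, Complex.ofReal_im, Complex.I_re, Complex.I_im] <;>
      norm_num
  have hy4 : y₀ ^ 4 = (((28098241213150104384940432439491141187490601851666007113831364439 : ℝ) / 2500000000000000000000000000000000000000000000000000000000000000) : ℂ) + (((46869443754459217873821228109271652744964256238136628537631759 : ℝ) / 62500000000000000000000000000000000000000000000000000000000000) : ℂ) * Complex.I := by
    rw [pow_succ, hy3, hy₀]
    rw [Complex.ext_iff]
    constructor <;>
      simp only [Complex.add_re, Complex.add_im, Complex.mul_re, Complex.mul_im,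
        Complex.ofReal_re, Complex.ofReal_im, Complex.I_re, Complex.I_im] <;>
      norm_num
  have hy5 : y₀ ^ 5 = ((-(514116880569996658070623148272094901013214595356383057979404499287069828081051717 : ℝ) / 25000000000000000000000000000000000000000000000000000000000000000000000000000000) : ℂ) + ((-(1716583475251520291767776968785391676773047352807545306145552061315918444281929 : ℝ) / 1000000000000000000000000000000000000000000000000000000000000000000000000000000) : ℂ) * Complex.I := by
    rw [pow_succ, hy4, hy₀]
    rw [Complex.ext_iff]
    constructor <;>
      simp only [Complex.add_re, Complex.add_im, Complex.mul_re, Complex.mul_im,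
        Complex.ofReal_re, Complex.ofReal_im, Complex.I_re, Complex.I_im] <;>
      norm_num
  have hy6 : y₀ ^ 6 = (((1175528811125271012071213949889691347963985631796747888674110862562205713683103838429883783191547 : ℝ) / 31250000000000000000000000000000000000000000000000000000000000000000000000000000000000000000000) : ℂ) + (((94295528312233002799498827376427953596888304505145271967717402887260084911621342757321517151911 : ℝ) / 25000000000000000000000000000000000000000000000000000000000000000000000000000000000000000000000) : ℂ) * Complex.I := by
    rw [pow_succ, hy5, hy₀]
    rw [Complex.ext_iff]
    constructor <;>
      simp only [Complex.add_re, Complex.add_im, Complex.mul_re, Complex.mul_im,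
        Complex.ofReal_re, Complex.ofReal_im, Complex.I_re, Complex.I_im] <;>
      norm_num
  have hy7 : y₀ ^ 7 = ((-(85987034579868665303595148110644302226771322300722632192577334465066834985081277725260909776031800487205005232439 : ℝ) / 1250000000000000000000000000000000000000000000000000000000000000000000000000000000000000000000000000000000000000) : ℂ) + ((-(2014199864988740133002524847083764306876428499449899327785272986167859819484440998182067523997210558798058205601 : ℝ) / 250000000000000000000000000000000000000000000000000000000000000000000000000000000000000000000000000000000000000) : ℂ) * Complex.I := by
    rw [pow_succ, hy6, hy₀]
    rw [Complex.ext_iff]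
    constructor <;>
      simp only [Complex.add_re, Complex.add_im, Complex.mul_re, Complex.mul_im,
        Complex.ofReal_re, Complex.ofReal_im, Complex.I_re, Complex.I_im] <;>
      norm_num
  have hy8 : y₀ ^ 8 = (((785996367659803183903181878895653673841864791894168883086308279569685482667408983001730668204019393785599744124253336387739255121 : ℝ) / 6250000000000000000000000000000000000000000000000000000000000000000000000000000000000000000000000000000000000000000000000000000) : ℂ) + (((1316948936138966757217213158933881459396344113469159064944191326121478669401511387918416691903893132556158157258241384709618201 : ℝ) / 78125000000000000000000000000000000000000000000000000000000000000000000000000000000000000000000000000000000000000000000000000) : ℂ) * Complex.I := by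
    rw [pow_succ, hy7, hy₀]
    rw [Complex.ext_iff]
    constructor <;>
      simp only [Complex.add_re, Complex.add_im, Complex.mul_re, Complex.mul_im,
        Complex.ofReal_re, Complex.ofReal_im, Complex.I_re, Complex.I_im] <;>
      norm_num
  have hy9 : y₀ ^ 9 = ((-(14365324809364914960085964369032260608504988477018781267782236809897231062403169506549698838658854387865880766740806441394984917324044048050580763 : ℝ) / 62500000000000000000000000000000000000000000000000000000000000000000000000000000000000000000000000000000000000000000000000000000000000000000000) : ℂ) + ((-(433935860487371382438633358142037228502186086691653852669410418721934651432345328177998053043805328311394056867932547586641329809075519750055779 : ℝ) / 12500000000000000000000000000000000000000000000000000000000000000000000000000000000000000000000000000000000000000000000000000000000000000000000) : ℂ) * Complex.I := by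
    rw [pow_succ, hy8, hy₀]
    rw [Complex.ext_iff]
    constructor <;>
      simp only [Complex.add_re, Complex.add_im, Complex.mul_re, Complex.mul_im,
        Complex.ofReal_re, Complex.ofReal_im, Complex.I_re, Complex.I_im] <;>
      norm_num
  have hw : eval y₀ EKHc = ((-(2968328147742082422759088554856949672562529475594838339969240866695868069566866224055879953143939759456288641719044048050580763 : ℝ) / 31250000000000000000000000000000000000000000000000000000000000000000000000000000000000000000000000000000000000000000000000000000000000000000000) : ℂ) + (((4089043565257855482940314678208042172949615373670018319970970326052989636891546095812321877953126763190128126270924480249944221 : ℝ) / 6250000000000000000000000000000000000000000000000000000000000000000000000000000000000000000000000000000000000000000000000000000000000000000000) : ℂ) * Complex.I := by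
    simp only [EKHc, eval_add, eval_sub, eval_mul, eval_pow, eval_C, eval_X]
    rw [hy9, hy8, hy7, hy6, hy5, hy4, hy3, hy2, hy₀]
    rw [Complex.ext_iff]
    constructor <;>
      simp only [Complex.add_re, Complex.add_im, Complex.sub_re, Complex.sub_im,
        Complex.mul_re, Complex.mul_im, Complex.ofReal_re, Complex.ofReal_im,
        Complex.I_re, Complex.I_im, Complex.one_re, Complex.one_im,
        Complex.re_ofNat, Complex.im_ofNat] <;>
      norm_num
  have hup : ‖eval y₀ EKHc‖ ≤ (2968328147742082422759088554856949672562529475594838339969240866695868069566866224055879953143939759456288641719044048050580763 : ℝ) / 31250000000000000000000000000000000000000000000000000000000000000000000000000000000000000000000000000000000000000000000000000000000000000000000 + (4089043565257855482940314678208042172949615373670018319970970326052989636891546095812321877953126763190128126270924480249944221 : ℝ) / 6250000000000000000000000000000000000000000000000000000000000000000000000000000000000000000000000000000000000000000000000000000000000000000000 := by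
    rw [hw]
    refine le_trans (Complex.norm_le_abs_re_add_abs_im _) ?_
    simp only [Complex.add_re, Complex.add_im, Complex.mul_re, Complex.mul_im,
      Complex.ofReal_re, Complex.ofReal_im, Complex.I_re, Complex.I_im]
    rw [abs_of_nonpos (by norm_num), abs_of_nonneg (by norm_num)]
    norm_num
  have hlow : 2 * ((61024364915011 : ℝ) / 2000000000000000) ^ 9 ≤ ‖eval y₀ EKHc‖ := by
    have hfac : eval y₀ EKHc = 2 * (EKHc.roots.map fun a => y₀ - a).prod := by
      conv_lhs => rw [EKHc_fac]
      rw [eval_mul, eval_C, eval_multiset_prod, Multiset.map_map]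
      simp only [Function.comp_apply, eval_sub, eval_X, eval_C]
    rw [hfac, norm_mul]
    have habs2 : ‖(2 : ℂ)‖ = 2 := by simp
    rw [habs2]
    have hcard : Multiset.card (EKHc.roots.map fun a => y₀ - a) = 9 := by
      rw [Multiset.card_map, EKHc_card_roots]
    have := EK_prod_abs_lower ((61024364915011 : ℝ) / 2000000000000000) (by norm_num)
      (EKHc.roots.map fun a => y₀ - a) ?_
    · rw [hcard] at this; linarith
    · intro z hz
      obtain ⟨a, ha, rfl⟩ := Multiset.mem_map.mp hz
      have him : (y₀ - a).im = (-(61024364915011 : ℝ) / 2000000000000000) := by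
        rw [Complex.sub_im, hy₀, hcon a ha]
        simp [Complex.add_im, Complex.mul_im]
      calc ((61024364915011 : ℝ) / 2000000000000000) = |(y₀ - a).im| := by rw [him]; rw [abs_of_nonpos (by norm_num)]; norm_num
        _ ≤ ‖y₀ - a‖ := Complex.abs_im_le_norm _
  have : (2 : ℝ) * ((61024364915011 : ℝ) / 2000000000000000) ^ 9 ≤ (2968328147742082422759088554856949672562529475594838339969240866695868069566866224055879953143939759456288641719044048050580763 : ℝ) / 31250000000000000000000000000000000000000000000000000000000000000000000000000000000000000000000000000000000000000000000000000000000000000000000 + (4089043565257855482940314678208042172949615373670018319970970326052989636891546095812321877953126763190128126270924480249944221 : ℝ) / 6250000000000000000000000000000000000000000000000000000000000000000000000000000000000000000000000000000000000000000000000000000000000000000000 := le_trans hlow hup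
  norm_num at this

lemma EK_filter_bind {α β : Type*} (s : Multiset α) (f : α → Multiset β)
    (P : β → Prop) [DecidablePred P] :
    (s.bind f).filter P = s.bind fun a => (f a).filter P := by
  induction s using Multiset.induction_on with
  | empty => simp
  | cons a s ih => simp [Multiset.bind_cons, Multiset.filter_add, ih]

lemma EK_conj_root {β : ℂ} (h : β ∈ EKHc.roots) : (starRingEnd ℂ) β ∈ EKHc.roots := by
  rw [Polynomial.mem_roots EKHc_ne] at h ⊢
  have h' : eval β EKHc = 0 := h
  show eval _ EKHc = 0
  have : eval ((starRingEnd ℂ) β) EKHc = (starRingEnd ℂ) (eval β EKHc) := by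
    simp only [EKHc, eval_add, eval_sub, eval_mul, eval_pow, eval_C, eval_X,
      map_add, map_sub, map_mul, map_pow, map_one, map_ofNat, Polynomial.eval_ofNat, Polynomial.eval_one]
  rw [this, h', map_zero]

lemma EK_count_in {β : ℂ} (hS : EKS β) :
    Multiset.card (((X ^ 2 - C β * X + 1 : Polynomial ℂ).roots).filter
      (fun z => ‖z‖ ≠ 1)) = 0 := by
  rw [Multiset.card_eq_zero, Multiset.filter_eq_nil]
  intro z hz
  rw [ne_eq, not_not]
  have hz' : z ^ 2 - β * z + 1 = 0 := EK_mem_quad_roots.mp hz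
  have hβ : ((β.re : ℝ) : ℂ) = β := by
    apply Complex.ext <;> simp [hS.1]
  exact EK_quad_root_abs_one hS.2 (by rw [hβ]; exact hz')

lemma EK_count_out {β : ℂ} (hS : ¬EKS β) :
    Multiset.card (((X ^ 2 - C β * X + 1 : Polynomial ℂ).roots).filter
      (fun z => ‖z‖ ≠ 1)) = 2 := by
  rw [Multiset.filter_eq_self.mpr, EK_quad_card_roots]
  intro z hz habs
  exact hS (EK_quad_root_abs_ne_one (EK_mem_quad_roots.mp hz) habs)

lemma EK_card_S : Multiset.card (EKHc.roots.filter EKS) = 7 := by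
  have hsplit := Multiset.filter_add_not EKS EKHc.roots
  have hcards : Multiset.card (EKHc.roots.filter EKS)
      + Multiset.card (EKHc.roots.filter fun β => ¬EKS β) = 9 := by
    rw [← Multiset.card_add, hsplit, EKHc_card_roots]
  obtain ⟨β, hβ, hβim⟩ := EK_nonreal
  have hnS : ¬EKS β := fun h => hβim h.1
  have hconj_nS : ¬EKS ((starRingEnd ℂ) β) := by
    intro h
    apply hβim
    have := h.1
    simp only [Complex.conj_im] at this
    linarith
  have hne : β ≠ (starRingEnd ℂ) β := by
    intro h
    apply hβim
    have := congrArg Complex.im h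
    simp only [Complex.conj_im] at this
    linarith
  have hpair : ({β, (starRingEnd ℂ) β} : Multiset ℂ) ≤ EKHc.roots.filter fun b => ¬EKS b := by
    rw [Multiset.le_iff_subset (by simp [Multiset.nodup_cons, hne])]
    intro z hz
    simp only [Multiset.insert_eq_cons, Multiset.mem_cons, Multiset.mem_singleton] at hz
    rcases hz with rfl | rfl
    · exact Multiset.mem_filter.mpr ⟨hβ, hnS⟩
    · exact Multiset.mem_filter.mpr ⟨EK_conj_root hβ, hconj_nS⟩
  have h2 : 2 ≤ Multiset.card (EKHc.roots.filter fun β => ¬EKS β) := by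
    have := Multiset.card_le_card hpair
    simpa using this
  have h7 := EK_seven
  omega

lemma EKGc_filter_card :
    Multiset.card (EKGc.roots.filter (fun z => ‖z‖ ≠ 1)) = 4 := by
  have hq0 : (0 : Polynomial ℂ) ∉ EKHc.roots.map (fun β => X ^ 2 - C β * X + 1) := by
    intro h
    obtain ⟨β, _, hb⟩ := Multiset.mem_map.mp h
    exact EK_quad_ne β hb
  have hroots : EKGc.roots = EKHc.roots.bind fun β => (X ^ 2 - C β * X + 1).roots := by
    rw [EKGc_fac, Polynomial.roots_C_mul _ (two_ne_zero),
      Polynomial.roots_multiset_prod _ hq0, Multiset.bind_map]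
  rw [hroots, EK_filter_bind, Multiset.card_bind]
  have hsplit := Multiset.filter_add_not EKS EKHc.roots
  set cnt : ℂ → ℕ := fun β =>
    Multiset.card (((X ^ 2 - C β * X + 1 : Polynomial ℂ).roots).filter
      (fun z => ‖z‖ ≠ 1)) with hcnt
  have : (Multiset.map (Multiset.card ∘ fun β => ((X ^ 2 - C β * X + 1 : Polynomial ℂ).roots).filter
      (fun z => ‖z‖ ≠ 1)) EKHc.roots).sum
      = (Multiset.map cnt (EKHc.roots.filter EKS)).sum
        + (Multiset.map cnt (EKHc.roots.filter fun β => ¬EKS β)).sum := by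
    conv_lhs => rw [← hsplit]
    rw [Multiset.map_add, Multiset.sum_add]
    rfl
  rw [this]
  have hzero : (Multiset.map cnt (EKHc.roots.filter EKS)).sum = 0 := by
    rw [Multiset.sum_eq_zero]
    intro n hn
    obtain ⟨β, hβ, rfl⟩ := Multiset.mem_map.mp hn
    exact EK_count_in (Multiset.mem_filter.mp hβ).2
  have htwo : (Multiset.map cnt (EKHc.roots.filter fun β => ¬EKS β)).sum = 4 := by
    have hmap : Multiset.map cnt (EKHc.roots.filter fun β => ¬EKS β)
        = Multiset.map (fun _ => 2) (EKHc.roots.filter fun β => ¬EKS β) :=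
      Multiset.map_congr rfl fun β hβ => EK_count_out (Multiset.mem_filter.mp hβ).2
    have hcard2 : Multiset.card (EKHc.roots.filter fun β => ¬EKS β) = 2 := by
      have hcards : Multiset.card (EKHc.roots.filter EKS)
          + Multiset.card (EKHc.roots.filter fun β => ¬EKS β) = 9 := by
        rw [← Multiset.card_add, hsplit, EKHc_card_roots]
      rw [EK_card_S] at hcards
      omega
    rw [hmap]
    rw [show (fun (_ : ℂ) => 2) = Function.const ℂ 2 from rfl, Multiset.map_const,
      Multiset.sum_replicate, hcard2]
    norm_num
  rw [hzero, htwo]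

lemma EK_pow_abs_one {a : ℝ} (h0 : 0 ≤ a) {n : ℕ} (hn : n ≠ 0) (h : a ^ n = 1) : a = 1 := by
  rcases lt_trichotomy a 1 with hlt | heq | hgt
  · exfalso
    have := pow_lt_one₀ h0 hlt hn
    rw [h] at this
    exact lt_irrefl 1 this
  · exact heq
  · exfalso
    have := one_lt_pow₀ hgt hn
    rw [h] at this
    exact lt_irrefl 1 this

lemma EKA_ne : EKA ≠ 0 := fun h => by simpa [EKA] using congrArg (eval 0) h

lemma EKGc_ne : EKGc ≠ 0 := fun h => by simpa [EKGc] using congrArg (eval 0) h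

lemma EKA_roots_abs {z : ℂ} (hz : z ∈ EKA.roots) : ‖z‖ = 1 := by
  rw [Polynomial.mem_roots EKA_ne] at hz
  have h : eval z EKA = 0 := hz
  simp only [EKA, eval_mul, eval_add, eval_sub, eval_pow, eval_X, eval_one] at h
  rcases mul_eq_zero.mp h with h1 | h1
  · have h3 : z ^ 3 = -1 := by linear_combination (z + 1) * h1
    have habs : ‖z‖ ^ 3 = 1 := by
      rw [← norm_pow, h3]; simp
    exact EK_pow_abs_one (norm_nonneg z) (by norm_num) habs
  · have h17 : z ^ 17 = 1 := by linear_combination (z - 1) * h1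
    have habs : ‖z‖ ^ 17 = 1 := by
      rw [← norm_pow, h17]; simp
    exact EK_pow_abs_one (norm_nonneg z) (by norm_num) habs

lemma EK_bigid : (1 + X ^ 13) * (1 - X ^ 17) * ((1 + X ^ 3) * (1 - X ^ 7))
    + (1 + X ^ 15) * (1 - X ^ 17) * ((1 + X ^ 3) * (1 + X) * (1 - X ^ 4))
    = (1 - X ^ 2 : Polynomial ℂ) ^ 2 * (EKA * EKGc) := by
  unfold EKA EKGc
  simp only [Polynomial.C_1, map_ofNat]
  ring

open scoped Classical in
/-- The Poincaré polynomial of the Lie algebra of derivations of the moduli algebra of the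
semisimple singularity `D₁₇ ⊕ E₇` is not unimodular: it has a root off the unit circle
(in fact exactly four, counted with multiplicity). This is a counterexample to
Theorem 4.5 of Elashvili–Khimshiashvili. -/
theorem D17_E7_not_unimodular
    (d e p q : Polynomial ℂ)
    (hd : (1 - Polynomial.X ^ 2) * d = (1 + Polynomial.X ^ 15) * (1 - Polynomial.X ^ 17))
    (he : (1 - Polynomial.X ^ 2) * e = (1 + Polynomial.X ^ 13) * (1 - Polynomial.X ^ 17))
    (hp : (1 - Polynomial.X ^ 2) * p = (1 + Polynomial.X ^ 3) * (1 - Polynomial.X ^ 7))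
    (hq : (1 - Polynomial.X ^ 2) * q
        = (1 + Polynomial.X ^ 3) * (1 + Polynomial.X) * (1 - Polynomial.X ^ 4))
    (F : Polynomial ℂ) (hF : F = e * p + d * q) :
    (∃ t₀ : ℂ, F.IsRoot t₀ ∧ ‖t₀‖ ≠ 1) ∧
    (F.roots.filter (fun z => ‖z‖ ≠ 1)).card = 4 := by
  have h2 : (1 - X ^ 2 : Polynomial ℂ) ≠ 0 := fun h => by simpa using congrArg (eval 0) h
  have h2sq : ((1 - X ^ 2 : Polynomial ℂ)) ^ 2 ≠ 0 := pow_ne_zero _ h2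
  have hkey : (1 - X ^ 2 : Polynomial ℂ) ^ 2 * F = (1 - X ^ 2) ^ 2 * (EKA * EKGc) := by
    calc (1 - X ^ 2 : Polynomial ℂ) ^ 2 * F
        = ((1 - X ^ 2) * e) * ((1 - X ^ 2) * p) + ((1 - X ^ 2) * d) * ((1 - X ^ 2) * q) := by
          rw [hF]; ring
      _ = (1 + X ^ 13) * (1 - X ^ 17) * ((1 + X ^ 3) * (1 - X ^ 7))
          + (1 + X ^ 15) * (1 - X ^ 17) * ((1 + X ^ 3) * (1 + X) * (1 - X ^ 4)) := by
          rw [he, hp, hd, hq]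
      _ = (1 - X ^ 2) ^ 2 * (EKA * EKGc) := EK_bigid
  have hFfac : F = EKA * EKGc := mul_left_cancel₀ h2sq hkey
  have hFne : F ≠ 0 := by
    rw [hFfac]; exact mul_ne_zero EKA_ne EKGc_ne
  have hroots : F.roots = EKA.roots + EKGc.roots := by
    rw [hFfac]
    exact Polynomial.roots_mul (mul_ne_zero EKA_ne EKGc_ne)
  have hAfilter : Multiset.card (EKA.roots.filter fun z => ‖z‖ ≠ 1) = 0 := by
    rw [Multiset.card_eq_zero, Multiset.filter_eq_nil]
    intro z hz
    rw [ne_eq, not_not]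
    exact EKA_roots_abs hz
  have hcard : Multiset.card (F.roots.filter fun z => ‖z‖ ≠ 1) = 4 := by
    rw [hroots, Multiset.filter_add, Multiset.card_add, hAfilter, EKGc_filter_card]
  refine ⟨?_, hcard⟩
  have hpos : 0 < Multiset.card (F.roots.filter fun z => ‖z‖ ≠ 1) := by
    rw [hcard]; norm_num
  obtain ⟨t₀, ht₀⟩ := Multiset.card_pos_iff_exists_mem.mp hpos
  have hmem := Multiset.mem_filter.mp ht₀
  exact ⟨t₀, (Polynomial.mem_roots hFne).mp hmem.1, hmem.2⟩
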